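/- Taking the union over all pairs of weak compositions a, b of r of length k, the induced maps κ̄_{a,b} give a bijection between the disjoint union ⨄_{a,b ∈ W_{r,k}} Π_{2(r)}/(S_a × S_b) and the set Π̃_{2(r),k} of all multiset partitions with r elements from [k] and r elements from {1̄,…,k̄}. -/

import Mathlib

open Finset

variable {r k : ℕ}

/-- The coloring map `κ_{a,b}` on the two-row alphabet `[r] ∪ [r̄]`:
unbarred elements (`Sum.inl`) are colored by `f` and barred elements (`Sum.inr`) by `g`. -/
def colorOf (f g : Fin r → Fin k) : Fin r ⊕ Fin r → Fin k ⊕ Fin k := Sum.map f g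

/-- The multiset partition `κ_{a,b}(π)` obtained by coloring all elements of the set
partition `π ∈ Π_{2(r)}`. -/
def coloredP (f g : Fin r → Fin k) (P : Finpartition (univ : Finset (Fin r ⊕ Fin r))) :
    Multiset (Multiset (Fin k ⊕ Fin k)) :=
  P.parts.val.map fun B => B.val.map (colorOf f g)

/-- `Q` is obtained from `P` by relabeling unbarred elements by `σ` and barred elements
by `τ`. -/
def relabeled (σ τ : Equiv.Perm (Fin r))
    (P Q : Finpartition (univ : Finset (Fin r ⊕ Fin r))) : Prop :=
  Q.parts = P.parts.image fun B => B.image (Sum.map ⇑σ ⇑τ)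

section AuxLemmas

variable {α : Type*} {β : Type*}

lemma aux_sum_map_map (c : α → β) (S : Multiset (Multiset α)) :
    (S.map (Multiset.map c)).sum = S.sum.map c := by
  induction S using Multiset.induction_on with
  | empty => simp
  | cons a S ih => simp [ih]

lemma aux_coe_flatten (L : List (List α)) :
    ((L.flatten : List α) : Multiset α) = (L.map (fun l : List α => (↑l : Multiset α))).sum := by
  induction L with
  | nil => rfl
  | cons p L ih =>
    rw [List.flatten_cons, List.map_cons, List.sum_cons, ← ih]
    rfl

lemma aux_exists_sub_map_eq [DecidableEq α] [DecidableEq β] {c : α → β} (b : Multiset β) :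
    ∀ {m : Multiset α}, b ≤ m.map c → ∃ u, u ≤ m ∧ u.map c = b := by
  induction b using Multiset.induction_on with
  | empty => exact fun _ => ⟨0, Multiset.zero_le _, rfl⟩
  | cons x b ih =>
    intro m h
    have hx : x ∈ m.map c := Multiset.mem_of_le h (Multiset.mem_cons_self _ _)
    obtain ⟨a, ha, rfl⟩ := Multiset.mem_map.1 hx
    have hb : b ≤ (m.erase a).map c := by
      rw [Multiset.map_erase_of_mem _ _ ha]
      have h2 := Multiset.erase_le_erase (c a) h
      rwa [Multiset.erase_cons_head] at h2
    obtain ⟨u, hu, hu2⟩ := ih hb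
    refine ⟨a ::ₘ u, ?_, by simp [hu2]⟩
    calc a ::ₘ u ≤ a ::ₘ m.erase a := Multiset.cons_le_cons _ hu
    _ = m := Multiset.cons_erase ha

lemma aux_exists_lists [Encodable β] (c : α → β) {s t : Multiset α}
    (h : s.map c = t.map c) :
    ∃ l₁ l₂ : List α, (l₁ : Multiset α) = s ∧ (l₂ : Multiset α) = t ∧
      l₁.map c = l₂.map c := by
  classical
  set key : α → ℕ := fun a => Encodable.encode (c a) with hkeydef
  set R : α → α → Prop := fun a b => key a ≤ key b with hR
  haveI htot : IsTotal α R := ⟨fun a b => le_total _ _⟩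
  haveI htrans : IsTrans α R := ⟨fun a b c' h1 h2 => le_trans h1 h2⟩
  haveI hdec : DecidableRel R := fun a b => Nat.decLe _ _
  set l₁ := List.insertionSort R s.toList with hl₁
  set l₂ := List.insertionSort R t.toList with hl₂
  have p1 : (l₁ : Multiset α) = s := by
    rw [Multiset.coe_eq_coe.2 (List.perm_insertionSort R _), Multiset.coe_toList]
  have p2 : (l₂ : Multiset α) = t := by
    rw [Multiset.coe_eq_coe.2 (List.perm_insertionSort R _), Multiset.coe_toList]
  have hkey : l₁.map key = l₂.map key := by
    refine List.Perm.eq_of_pairwise' (r := (· ≤ · : ℕ → ℕ → Prop)) ?_ ?_ ?_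
    rotate_right
    · rw [← Multiset.coe_eq_coe, ← Multiset.map_coe, ← Multiset.map_coe, p1, p2]
      have e : ∀ u : Multiset α, u.map key = (u.map c).map Encodable.encode := by
        intro u; rw [Multiset.map_map]; rfl
      rw [e, e, h]
    · exact (List.pairwise_insertionSort R _).map key (fun a b hab => hab)
    · exact (List.pairwise_insertionSort R _).map key (fun a b hab => hab)
  have henc : (l₁.map c).map Encodable.encode = (l₂.map c).map Encodable.encode := by
    rw [List.map_map, List.map_map]; exact hkey
  exact ⟨l₁, l₂, p1, p2, List.map_injective_iff.2 Encodable.encode_injective henc⟩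

lemma aux_parts_val_sum [DecidableEq α] {t : Finset α} (P : Finpartition t) :
    (P.parts.val.map Finset.val).sum = t.val := by
  ext a
  rw [Multiset.count_sum]
  have hfs : (P.parts.val.map fun B => Multiset.count a B.val).sum
      = ∑ B ∈ P.parts, Multiset.count a B.val := rfl
  rw [hfs]
  by_cases ha : a ∈ t
  · obtain ⟨B₀, ⟨hB₀, haB₀⟩, huniq⟩ := P.existsUnique_mem ha
    rw [Finset.sum_eq_single B₀, Multiset.count_eq_one_of_mem B₀.nodup haB₀,
      Multiset.count_eq_one_of_mem t.nodup ha]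
    · intro B hB hne
      by_cases haB : a ∈ B
      · exact absurd (huniq B ⟨hB, haB⟩) hne
      · exact Multiset.count_eq_zero_of_notMem haB
    · intro h; exact absurd hB₀ h
  · rw [Multiset.count_eq_zero_of_notMem ha, Finset.sum_eq_zero]
    intro B hB
    exact Multiset.count_eq_zero_of_notMem (fun haB => ha (P.le hB haB))

lemma aux_finpartition_of_parts [DecidableEq α] {t : Finset α} (parts : Multiset (Finset α))
    (hsum : (parts.map Finset.val).sum = t.val) (hne : ∅ ∉ parts) :
    ∃ P : Finpartition t, P.parts.val = parts := by
  classical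
  have hcount : ∀ a, (parts.map fun B => Multiset.count a B.val).sum = Multiset.count a t.val := by
    intro a; rw [← hsum, Multiset.count_sum]
  have htle : ∀ a, Multiset.count a t.val ≤ 1 := Multiset.nodup_iff_count_le_one.1 t.nodup
  have hnodup : parts.Nodup := by
    rw [Multiset.nodup_iff_count_le_one]
    intro B
    by_contra hB
    push_neg at hB
    have hBmem : B ∈ parts := by rw [← Multiset.count_pos]; omega
    have hBne : B ≠ ∅ := fun h => hne (h ▸ hBmem)
    obtain ⟨a, haB⟩ := Finset.nonempty_iff_ne_empty.2 hBne
    have hle : Multiset.replicate 2 B ≤ parts := by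
      rw [Multiset.le_iff_count]; intro B'
      by_cases hB' : B' = B
      · subst hB'; simpa [Multiset.count_replicate] using Nat.succ_le_of_lt hB
      · simp [Multiset.count_replicate, hB']
    obtain ⟨u, hu⟩ := Multiset.le_iff_exists_add.1 hle
    have hc := hcount a
    rw [hu] at hc
    simp only [Multiset.map_add, Multiset.map_replicate, Multiset.sum_add,
      Multiset.sum_replicate, smul_eq_mul] at hc
    have h1 : 0 < Multiset.count a B.val := Multiset.count_pos.2 haB
    have h2 := htle a
    omega
  have hdisj : (↑(⟨parts, hnodup⟩ : Finset (Finset α)) : Set (Finset α)).PairwiseDisjoint id := by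
    intro B hB B' hB' hne'
    have hB2 : B ∈ parts := by simpa using hB
    have hB2' : B' ∈ parts := by simpa using hB'
    rw [Function.onFun, id, id, Finset.disjoint_left]
    intro a haB haB'
    have hle : (B ::ₘ {B'}) ≤ parts := by
      rw [Multiset.le_iff_count]; intro B''
      rcases eq_or_ne B'' B with rfl | h1
      · have : Multiset.count B'' ({B'} : Multiset _) = 0 := by
          simp [Multiset.count_singleton, hne']
        rw [Multiset.count_cons_self, this]
        exact Multiset.one_le_count_iff_mem.2 hB2
      · rw [Multiset.count_cons_of_ne h1]
        rcases eq_or_ne B'' B' with rfl | h2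
        · simp only [Multiset.count_singleton, if_pos rfl]
          exact Multiset.one_le_count_iff_mem.2 hB2'
        · simp [Multiset.count_singleton, h2]
    obtain ⟨u, hu⟩ := Multiset.le_iff_exists_add.1 hle
    have hc := hcount a
    rw [hu] at hc
    simp only [Multiset.map_add, Multiset.map_cons, Multiset.map_singleton,
      Multiset.sum_add, Multiset.sum_cons, Multiset.sum_singleton] at hc
    have h1 : 0 < Multiset.count a B.val := Multiset.count_pos.2 haB
    have h2 : 0 < Multiset.count a B'.val := Multiset.count_pos.2 haB'
    have h3 := htle a
    omega
  have hsup : (⟨parts, hnodup⟩ : Finset (Finset α)).sup id = t := by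
    ext a
    rw [Finset.mem_sup]
    constructor
    · rintro ⟨B, hB, haB⟩
      simp only [Finset.mem_mk, Multiset.mem_coe] at hB
      rw [Finset.mem_def, ← Multiset.count_pos, ← hcount a]
      have hmem : Multiset.count a B.val ∈ parts.map fun B => Multiset.count a B.val :=
        Multiset.mem_map_of_mem _ hB
      have h1 : 0 < Multiset.count a B.val := Multiset.count_pos.2 haB
      have := Multiset.single_le_sum (fun x _ => Nat.zero_le x) _ hmem
      omega
    · intro ha
      have hpos : 0 < Multiset.count a t.val := Multiset.count_pos.2 ha
      rw [← hcount a] at hpos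
      by_contra hnone
      push_neg at hnone
      have : (parts.map fun B => Multiset.count a B.val).sum = 0 := by
        rw [Multiset.sum_eq_zero_iff]
        intro x hx
        obtain ⟨B, hB, rfl⟩ := Multiset.mem_map.1 hx
        have : a ∉ B := fun haB => hnone B (by simpa [Finset.mem_mk] using hB) haB
        simpa [Multiset.count_eq_zero] using this
      omega
  refine ⟨⟨⟨parts, hnodup⟩, Finset.supIndep_iff_pairwiseDisjoint.2 hdisj, hsup, ?_⟩, rfl⟩
  simpa [Finset.bot_eq_empty] using hne

lemma aux_exists_parts [DecidableEq α] [DecidableEq β] (c : α → β) (s : Multiset (Multiset β)) :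
    ∀ (t : Finset α), t.val.map c = s.sum →
    ∃ parts : Multiset (Finset α), (parts.map Finset.val).sum = t.val ∧
      parts.map (fun B => B.val.map c) = s := by
  induction s using Multiset.induction_on with
  | empty =>
    intro t ht
    simp only [Multiset.sum_zero, Multiset.map_eq_zero] at ht
    exact ⟨0, by simp [ht], by simp⟩
  | cons b s ih =>
    intro t ht
    rw [Multiset.sum_cons] at ht
    have hb : b ≤ t.val.map c := ht ▸ Multiset.le_add_right _ _
    obtain ⟨u, hut, huc⟩ := aux_exists_sub_map_eq b hb
    have hund : u.Nodup := Multiset.nodup_of_le hut t.nodup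
    have hw : u + (t.val - u) = t.val := add_tsub_cancel_of_le hut
    have hwc : (t.val - u).map c = s.sum := by
      have h1 : t.val.map c = u.map c + (t.val - u).map c := by
        rw [← Multiset.map_add, hw]
      rw [ht, huc] at h1
      exact (add_left_cancel h1.symm)
    obtain ⟨parts, h1, h2⟩ :=
      ih (⟨t.val - u, Multiset.nodup_of_le (tsub_le_self) t.nodup⟩ : Finset α) hwc
    refine ⟨(⟨u, hund⟩ : Finset α) ::ₘ parts, ?_, ?_⟩
    · rw [Multiset.map_cons, Multiset.sum_cons]
      show u + _ = t.val
      rw [h1]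
      exact hw
    · rw [Multiset.map_cons, h2]
      show (u.map c) ::ₘ s = b ::ₘ s
      rw [huc]

lemma aux_monotone_ext {n m : ℕ} {f f' : Fin n → Fin m} (hf : Monotone f) (hf' : Monotone f')
    (h : Multiset.map f Finset.univ.val = Multiset.map f' Finset.univ.val) : f = f' := by
  rw [Fin.univ_val_map, Fin.univ_val_map] at h
  exact List.ofFn_injective (List.Perm.eq_of_pairwise'
    (List.sortedLE_ofFn_iff.2 hf).pairwise (List.sortedLE_ofFn_iff.2 hf').pairwise
    (Multiset.coe_eq_coe.1 h))

lemma aux_exists_monotone {n m : ℕ} (s : Multiset (Fin m)) (hs : Multiset.card s = n) :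
    ∃ f : Fin n → Fin m, Monotone f ∧ Multiset.map f Finset.univ.val = s := by
  classical
  set l := Multiset.sort s (· ≤ ·) with hl
  have hlen : l.length = n := by rw [hl, Multiset.length_sort, hs]
  have hsort : l.Pairwise (· ≤ ·) := Multiset.pairwise_sort (s := s) (r := (· ≤ ·))
  refine ⟨fun i => l.get (Fin.cast hlen.symm i), ?_, ?_⟩
  · intro i j hij
    exact hsort.rel_get_of_le hij
  · rw [Fin.univ_val_map]
    have he : List.ofFn (fun i => l.get (Fin.cast hlen.symm i)) = l := by
      apply List.ext_get
      · simp [hlen]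
      · intro i h1 h2
        simp
    rw [he, hl, Multiset.sort_eq]

lemma aux_map_flatten_blocks {φ : α → α} :
    ∀ (lp lq : List (List α)), lp.map List.length = lq.map List.length →
      lp.flatten.map φ = lq.flatten → lp.map (List.map φ) = lq := by
  intro lp
  induction lp with
  | nil =>
    intro lq h1 _
    cases lq with
    | nil => rfl
    | cons q lq => simp at h1
  | cons p lp ih =>
    intro lq h1 h2
    cases lq with
    | nil => simp at h1
    | cons q lq =>
      simp only [List.map_cons, List.cons.injEq] at h1
      obtain ⟨hL, hT⟩ := h1
      simp only [List.flatten_cons, List.map_append] at h2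
      obtain ⟨e1, e2⟩ := List.append_inj h2 (by simp [hL])
      simp only [List.map_cons, e1, ih lq hT e2]

lemma aux_inl_inr_cancel {γ δ : Type*} [DecidableEq γ] [DecidableEq δ] {s s' : Multiset γ}
    {t t' : Multiset δ}
    (h : s.map Sum.inl + t.map Sum.inr = s'.map Sum.inl + t'.map Sum.inr) : s = s' ∧ t = t' := by
  classical
  constructor
  · ext a
    have hc := congrArg (Multiset.count (Sum.inl a : γ ⊕ δ)) h
    rw [Multiset.count_add, Multiset.count_add,
      Multiset.count_map_eq_count' _ _ Sum.inl_injective,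
      Multiset.count_map_eq_count' _ _ Sum.inl_injective,
      Multiset.count_eq_zero.2 (by simp : (Sum.inl a : γ ⊕ δ) ∉ t.map Sum.inr),
      Multiset.count_eq_zero.2 (by simp : (Sum.inl a : γ ⊕ δ) ∉ t'.map Sum.inr)] at hc
    simpa using hc
  · ext b
    have hc := congrArg (Multiset.count (Sum.inr b : γ ⊕ δ)) h
    rw [Multiset.count_add, Multiset.count_add,
      Multiset.count_map_eq_count' _ _ Sum.inr_injective,
      Multiset.count_map_eq_count' _ _ Sum.inr_injective,
      Multiset.count_eq_zero.2 (by simp : (Sum.inr b : γ ⊕ δ) ∉ s.map Sum.inl),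
      Multiset.count_eq_zero.2 (by simp : (Sum.inr b : γ ⊕ δ) ∉ s'.map Sum.inl)] at hc
    simpa using hc

lemma aux_blocks {α : Type*} {β : Type*} [Encodable β] (c : α → β) :
    ∀ (LP LQ : List (Finset α)),
      LP.map (fun B => B.val.map c) = LQ.map (fun B => B.val.map c) →
      ∃ lp lq : List (List α),
        lp.map (fun x : List α => (↑x : Multiset α)) = LP.map Finset.val ∧
        lq.map (fun x : List α => (↑x : Multiset α)) = LQ.map Finset.val ∧
        lp.map (List.map c) = lq.map (List.map c) := by
  intro LP
  induction LP with
  | nil =>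
    intro LQ h
    cases LQ with
    | nil => exact ⟨[], [], rfl, rfl, rfl⟩
    | cons B' LQ => simp at h
  | cons B LP ih =>
    intro LQ h
    cases LQ with
    | nil => simp at h
    | cons B' LQ =>
      simp only [List.map_cons, List.cons.injEq] at h
      obtain ⟨h1, h2⟩ := h
      obtain ⟨l₁, l₂, p1, p2, pc⟩ := aux_exists_lists c h1
      obtain ⟨lp, lq, q1, q2, qc⟩ := ih LQ h2
      exact ⟨l₁ :: lp, l₂ :: lq, by simp [p1, q1], by simp [p2, q2], by simp [pc, qc]⟩

end AuxLemmas

lemma aux_coloredP_sum (f g : Fin r → Fin k) (P : Finpartition (univ : Finset (Fin r ⊕ Fin r))) :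
    (coloredP f g P).sum = Multiset.map (colorOf f g) univ.val := by
  unfold coloredP
  rw [show (P.parts.val.map fun B => B.val.map (colorOf f g))
      = (P.parts.val.map Finset.val).map (Multiset.map (colorOf f g)) by
    rw [Multiset.map_map]; rfl]
  rw [aux_sum_map_map, aux_parts_val_sum]

lemma aux_univ_split :
    (univ : Finset (Fin r ⊕ Fin r)).val
      = Multiset.map Sum.inl (univ : Finset (Fin r)).val
        + Multiset.map Sum.inr (univ : Finset (Fin r)).val := by
  rw [← Finset.univ_disjSum_univ]
  rfl

lemma aux_color_univ (f g : Fin r → Fin k) :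
    Multiset.map (colorOf f g) (univ : Finset (Fin r ⊕ Fin r)).val
      = Multiset.map Sum.inl (Multiset.map f (univ : Finset (Fin r)).val)
        + Multiset.map Sum.inr (Multiset.map g (univ : Finset (Fin r)).val) := by
  rw [aux_univ_split, Multiset.map_add, Multiset.map_map, Multiset.map_map,
    Multiset.map_map, Multiset.map_map]
  rfl

theorem stmt3_part1 (f g f' g' : Fin r → Fin k) (hf : Monotone f) (hg : Monotone g)
    (hf' : Monotone f') (hg' : Monotone g')
    (P Q : Finpartition (univ : Finset (Fin r ⊕ Fin r))) :
        coloredP f g P = coloredP f' g' Q ↔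
          (f = f' ∧ g = g' ∧
            ∃ σ τ : Equiv.Perm (Fin r), f ∘ ⇑σ = f ∧ g ∘ ⇑τ = g ∧ relabeled σ τ P Q) := by
  classical
  constructor
  · intro h
    have hsum := congrArg Multiset.sum h
    rw [aux_coloredP_sum, aux_coloredP_sum, aux_color_univ, aux_color_univ] at hsum
    obtain ⟨hfe, hge⟩ := aux_inl_inr_cancel hsum
    obtain rfl : f = f' := aux_monotone_ext hf hf' hfe
    obtain rfl : g = g' := aux_monotone_ext hg hg' hge
    refine ⟨rfl, rfl, ?_⟩
    have hPQ : Multiset.map (fun B : Finset (Fin r ⊕ Fin r) => B.val.map (colorOf f g))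
        P.parts.val
        = Multiset.map (fun B => B.val.map (colorOf f g)) Q.parts.val := h
    obtain ⟨LP, LQ, hLP, hLQ, hLc⟩ :=
      aux_exists_lists (fun B : Finset (Fin r ⊕ Fin r) => B.val.map (colorOf f g)) hPQ
    obtain ⟨lp, lq, hlp, hlq, hlc⟩ := aux_blocks (colorOf f g) LP LQ hLc
    have hlenblocks : lp.map List.length = lq.map List.length := by
      have h2 := congrArg (List.map List.length) hlc
      simpa [List.map_map, Function.comp_def] using h2
    have hcoeP : ((lp.flatten : List (Fin r ⊕ Fin r)) : Multiset (Fin r ⊕ Fin r))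
        = (univ : Finset (Fin r ⊕ Fin r)).val := by
      rw [aux_coe_flatten, hlp, ← Multiset.sum_coe, ← Multiset.map_coe, hLP, aux_parts_val_sum]
    have hcoeQ : ((lq.flatten : List (Fin r ⊕ Fin r)) : Multiset (Fin r ⊕ Fin r))
        = (univ : Finset (Fin r ⊕ Fin r)).val := by
      rw [aux_coe_flatten, hlq, ← Multiset.sum_coe, ← Multiset.map_coe, hLQ, aux_parts_val_sum]
    have hndP : lp.flatten.Nodup := by
      have h2 := univ (α := Fin r ⊕ Fin r) |>.nodup
      rw [← hcoeP] at h2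
      exact Multiset.coe_nodup.1 h2
    have hndQ : lq.flatten.Nodup := by
      have h2 := univ (α := Fin r ⊕ Fin r) |>.nodup
      rw [← hcoeQ] at h2
      exact Multiset.coe_nodup.1 h2
    have hmemP : ∀ x, x ∈ lp.flatten := by
      intro x
      have h2 : x ∈ (univ : Finset (Fin r ⊕ Fin r)).val := Finset.mem_univ x
      rw [← hcoeP] at h2
      exact Multiset.mem_coe.1 h2
    have hmemQ : ∀ x, x ∈ lq.flatten := by
      intro x
      have h2 : x ∈ (univ : Finset (Fin r ⊕ Fin r)).val := Finset.mem_univ x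
      rw [← hcoeQ] at h2
      exact Multiset.mem_coe.1 h2
    have hlen : lp.flatten.length = lq.flatten.length := by
      have h2 := congrArg Multiset.card (hcoeP.trans hcoeQ.symm)
      simpa using h2
    set e₁ := List.Nodup.getEquivOfForallMemList lp.flatten hndP hmemP with he₁
    set e₂ := List.Nodup.getEquivOfForallMemList lq.flatten hndQ hmemQ with he₂
    set π : Equiv.Perm (Fin r ⊕ Fin r) := e₁.symm.trans ((finCongr hlen).trans e₂) with hπ
    have hπget : ∀ i : Fin lp.flatten.length,
        π (lp.flatten.get i) = lq.flatten.get (Fin.cast hlen i) := by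
      intro i
      have h1 : e₁ i = lp.flatten.get i := rfl
      show ((finCongr hlen).trans e₂) (e₁.symm (lp.flatten.get i)) = _
      rw [← h1, Equiv.symm_apply_apply]
      rfl
    have hmapπ : lp.flatten.map ⇑π = lq.flatten := by
      apply List.ext_get (by rw [List.length_map]; exact hlen)
      intro i h1 h2
      have h1' : i < lp.flatten.length := by rw [List.length_map] at h1; exact h1
      have h3 := hπget ⟨i, h1'⟩
      simp only [List.get_eq_getElem, List.getElem_map]
      simp only [List.get_eq_getElem] at h3
      exact h3
    have hcflat : lp.flatten.map (colorOf f g) = lq.flatten.map (colorOf f g) := by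
      rw [List.map_flatten, List.map_flatten, hlc]
    have hπc : ∀ x, colorOf f g (π x) = colorOf f g x := by
      intro x
      obtain ⟨i, rfl⟩ : ∃ i, lp.flatten.get i = x := ⟨e₁.symm x, e₁.apply_symm_apply x⟩
      rw [hπget i]
      have hip : (i : ℕ) < lp.flatten.length := i.2
      have hiq : (i : ℕ) < lq.flatten.length := hlen ▸ i.2
      have hiq' : (i : ℕ) < (lq.flatten.map (colorOf f g)).length := by
        rw [List.length_map]; exact hiq
      have hip' : (i : ℕ) < (lp.flatten.map (colorOf f g)).length := by
        rw [List.length_map]; exact hip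
      have c1 : colorOf f g (lq.flatten.get (Fin.cast hlen i))
          = (lq.flatten.map (colorOf f g))[(i : ℕ)]'hiq' := by
        simp only [List.getElem_map, List.get_eq_getElem]
        rfl
      have c2 : (lq.flatten.map (colorOf f g))[(i : ℕ)]'hiq'
          = (lp.flatten.map (colorOf f g))[(i : ℕ)]'hip' :=
        (List.getElem_of_eq hcflat.symm _)
      have c3 : (lp.flatten.map (colorOf f g))[(i : ℕ)]'hip'
          = colorOf f g (lp.flatten.get i) := by
        simp only [List.getElem_map, List.get_eq_getElem]
      rw [c1, c2, c3]
    have hside1 : ∀ x : Fin r, ∃ y, π (Sum.inl x) = Sum.inl y := by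
      intro x
      rcases hx : π (Sum.inl x) with y | y
      · exact ⟨y, rfl⟩
      · exfalso
        have h2 := hπc (Sum.inl x)
        rw [hx] at h2
        simp [colorOf] at h2
    have hside2 : ∀ x : Fin r, ∃ y, π (Sum.inr x) = Sum.inr y := by
      intro x
      rcases hx : π (Sum.inr x) with y | y
      · exfalso
        have h2 := hπc (Sum.inr x)
        rw [hx] at h2
        simp [colorOf] at h2
      · exact ⟨y, rfl⟩
    choose sf hsf using hside1
    choose tf htf using hside2
    have hsinj : Function.Injective sf := by
      intro a b hab
      have h2 : π (Sum.inl a) = π (Sum.inl b) := by rw [hsf, hsf, hab]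
      simpa using π.injective h2
    have htinj : Function.Injective tf := by
      intro a b hab
      have h2 : π (Sum.inr a) = π (Sum.inr b) := by rw [htf, htf, hab]
      simpa using π.injective h2
    refine ⟨Equiv.ofBijective sf (Finite.injective_iff_bijective.1 hsinj),
      Equiv.ofBijective tf (Finite.injective_iff_bijective.1 htinj), ?_, ?_, ?_⟩
    · funext a
      have h2 := hπc (Sum.inl a)
      rw [hsf a] at h2
      simp only [colorOf, Sum.map_inl, Sum.inl.injEq] at h2
      exact h2
    · funext a
      have h2 := hπc (Sum.inr a)
      rw [htf a] at h2
      simp only [colorOf, Sum.map_inr, Sum.inr.injEq] at h2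
      exact h2
    · show Q.parts = P.parts.image fun B => B.image (Sum.map sf tf)
      have hmapστ : Sum.map sf tf = ⇑π := by
        funext x
        cases x with
        | inl a => exact (hsf a).symm
        | inr a => exact (htf a).symm
      rw [hmapστ]
      have hblocksπ : lp.map (List.map ⇑π) = lq := aux_map_flatten_blocks lp lq hlenblocks hmapπ
      have hLPimg : LP.map (Finset.image ⇑π) = LQ := by
        apply List.map_injective_iff.2 Finset.val_injective
        rw [List.map_map]
        have h1 : (Finset.val ∘ Finset.image ⇑π) = fun B : Finset (Fin r ⊕ Fin r) =>
            B.val.map ⇑π :=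
          funext fun B => Finset.image_val_of_injOn (π.injective.injOn)
        rw [h1]
        have h2 : LP.map (fun B : Finset (Fin r ⊕ Fin r) => B.val.map ⇑π)
            = (LP.map Finset.val).map (Multiset.map ⇑π) := by
          rw [List.map_map]; rfl
        rw [h2, ← hlp, ← hlq, ← hblocksπ, List.map_map, List.map_map]
        rfl
      have hval : (P.parts.image (Finset.image ⇑π)).val = Q.parts.val := by
        rw [Finset.image_val_of_injOn ((Finset.image_injective π.injective).injOn),
          ← hLP, ← hLQ, Multiset.map_coe, hLPimg]
      exact (Finset.val_inj.1 hval).symm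
  · rintro ⟨rfl, rfl, σ, τ, hfσ, hgτ, hrel⟩
    have hrel' : Q.parts = P.parts.image fun B => B.image (Sum.map ⇑σ ⇑τ) := hrel
    have hminj : Function.Injective (Sum.map ⇑σ ⇑τ) := by
      have h1 : Sum.map ⇑σ ⇑τ = ⇑(Equiv.sumCongr σ τ) := rfl
      rw [h1]
      exact (Equiv.sumCongr σ τ).injective
    unfold coloredP
    rw [hrel', Finset.image_val_of_injOn ((Finset.image_injective hminj).injOn),
      Multiset.map_map]
    symm
    apply Multiset.map_congr rfl
    intro B hB
    show ((B.image (Sum.map ⇑σ ⇑τ)).val).map (colorOf f g) = B.val.map (colorOf f g)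
    rw [Finset.image_val_of_injOn hminj.injOn, Multiset.map_map]
    have h1 : (colorOf f g ∘ Sum.map ⇑σ ⇑τ) = colorOf f g := by
      funext x
      cases x with
      | inl a =>
        show Sum.inl (f (σ a)) = Sum.inl (f a)
        rw [show f (σ a) = f a from congrFun hfσ a]
      | inr a =>
        show Sum.inr (g (τ a)) = Sum.inr (g a)
        rw [show g (τ a) = g a from congrFun hgτ a]
    rw [h1]

theorem stmt3_part2 (M : Multiset (Multiset (Fin k ⊕ Fin k)))
    (h0 : 0 ∉ M)
    (hL : M.sum.countP (fun x => x.isLeft = true) = r)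
    (hR : M.sum.countP (fun x => x.isRight = true) = r) :
      ∃ (f g : Fin r → Fin k) (P : Finpartition (univ : Finset (Fin r ⊕ Fin r))),
        Monotone f ∧ Monotone g ∧ coloredP f g P = M := by
  classical
  have hmapL : ∀ (T : Multiset (Fin k ⊕ Fin k)),
      (T.filterMap Sum.getLeft?).map Sum.inl = T.filter (fun x => x.isLeft = true) ∧
      (T.filterMap Sum.getRight?).map Sum.inr = T.filter (fun x => x.isRight = true) := by
    intro T
    induction T using Multiset.induction_on with
    | empty => simp
    | cons x T ih =>
      cases x <;>
        simp [Sum.getLeft?, Sum.getRight?, ih.1, ih.2, Multiset.filter_cons,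
          Multiset.filterMap_cons_none _ _ Sum.getRight?_inl,
          Multiset.filterMap_cons_none _ _ Sum.getLeft?_inr]
  have hcardL : Multiset.card (M.sum.filterMap Sum.getLeft?) = r := by
    have := congrArg Multiset.card (hmapL M.sum).1
    rw [Multiset.card_map] at this
    rw [this, ← Multiset.countP_eq_card_filter, hL]
  have hcardR : Multiset.card (M.sum.filterMap Sum.getRight?) = r := by
    have := congrArg Multiset.card (hmapL M.sum).2
    rw [Multiset.card_map] at this
    rw [this, ← Multiset.countP_eq_card_filter, hR]
  obtain ⟨f, hfmono, hfval⟩ := aux_exists_monotone _ hcardL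
  obtain ⟨g, hgmono, hgval⟩ := aux_exists_monotone _ hcardR
  have hcu : Multiset.map (colorOf f g) (univ : Finset (Fin r ⊕ Fin r)).val = M.sum := by
    rw [aux_color_univ, hfval, hgval, (hmapL M.sum).1, (hmapL M.sum).2]
    rw [show M.sum.filter (fun x => x.isRight = true)
        = M.sum.filter (fun x => ¬ (x.isLeft = true)) from
      Multiset.filter_congr (fun x _ => by cases x <;> simp)]
    exact Multiset.filter_add_not _ _
  obtain ⟨parts, h1, h2⟩ := aux_exists_parts (colorOf f g) M univ hcu
  have hnp : ∅ ∉ parts := by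
    intro he
    apply h0
    have : ((∅ : Finset (Fin r ⊕ Fin r)).val.map (colorOf f g)) ∈ M := by
      rw [← h2]
      exact Multiset.mem_map_of_mem _ he
    simpa using this
  obtain ⟨P, hP⟩ := aux_finpartition_of_parts parts h1 hnp
  refine ⟨f, g, P, hfmono, hgmono, ?_⟩
  unfold coloredP
  rw [hP, h2]

/-- Taking the union over all pairs of weak compositions `a, b` of `r`
of length `k` (encoded by their monotone coloring maps `f, g`), the maps `κ̄_{a,b}` give
a bijection between `⨄_{a,b} Π_{2(r)}/(S_a × S_b)` and the set `Π̃_{2(r),k}` of multiset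
partitions with `r` elements from `[k]` and `r` elements from `[k̄]`: two colored images
(possibly for different pairs of compositions) agree iff the compositions agree and the
set partitions lie in the same orbit, and every multiset partition in `Π̃_{2(r),k}` arises
as a colored image. -/
theorem stmt3 :
    (∀ f g f' g' : Fin r → Fin k, Monotone f → Monotone g → Monotone f' → Monotone g' →
      ∀ P Q : Finpartition (univ : Finset (Fin r ⊕ Fin r)),
        coloredP f g P = coloredP f' g' Q ↔
          (f = f' ∧ g = g' ∧
            ∃ σ τ : Equiv.Perm (Fin r), f ∘ ⇑σ = f ∧ g ∘ ⇑τ = g ∧ relabeled σ τ P Q)) ∧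
    (∀ M : Multiset (Multiset (Fin k ⊕ Fin k)),
      0 ∉ M →
      M.sum.countP (fun x => x.isLeft = true) = r →
      M.sum.countP (fun x => x.isRight = true) = r →
      ∃ (f g : Fin r → Fin k) (P : Finpartition (univ : Finset (Fin r ⊕ Fin r))),
        Monotone f ∧ Monotone g ∧ coloredP f g P = M) := by
  exact ⟨fun f g f' g' hf hg hf' hg' P Q => stmt3_part1 f g f' g' hf hg hf' hg' P Q,
    fun M h0 hL hR => stmt3_part2 M h0 hL hR⟩
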